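/- Let N = 2M be an even natural number, and define the Jordan–Wigner Majorana matrices ψ : Fin N → Matrix (Fin M → Fin 2) (Fin M → Fin 2) ℂ by ψ_{2k+1} = σ3^{⊗k} ⊗ σ1 ⊗ 1^{⊗(M−k−1)} and ψ_{2k+2} = σ3^{⊗k} ⊗ σ2 ⊗ 1^{⊗(M−k−1)} for k = 0, …, M−1, and the fermion parity matrix Γ = σ3^{⊗M}. For A : Finset (Fin N) let Ψ A be the ordered (increasing) product of the ψ i over i ∈ A. Then for every n ≥ 1 and every weight function w : ℕ → ℝ: (1/2) · Σ over all n-tuples (A : Fin n → Finset (Fin N)) of (∏_k w (|A k|)) · (Complex.normSq (Matrix.trace (∏_k Ψ (A k))) + Complex.normSq (Matrix.trace (Γ * ∏_k Ψ (A k)))) = Σ over even s with 0 ≤ s ≤ N of (N.choose s) · (Σ_{l = 0}^{N} w l · Σ_{j = 0}^{min s l} (−1)^j · (s.choose j) · ((N − s).choose (l − j)))^n, where the matrix products ∏_k are taken in the order k = 0, 1, …, n−1. -/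

import Mathlib

noncomputable def σ1 : Matrix (Fin 2) (Fin 2) ℂ := !![0, 1; 1, 0]
noncomputable def σ2 : Matrix (Fin 2) (Fin 2) ℂ := !![0, -Complex.I; Complex.I, 0]
noncomputable def σ3 : Matrix (Fin 2) (Fin 2) ℂ := !![1, 0; 0, -1]

noncomputable def pm (v : ZMod 2 × ZMod 2) : Matrix (Fin 2) (Fin 2) ℂ :=
  if v = (1, 0) then σ1 else if v = (0, 1) then σ2 else if v = (1, 1) then σ3 else 1

@[simp] lemma pm00 : pm (0, 0) = 1 := by
  rw [pm, if_neg (by decide), if_neg (by decide), if_neg (by decide)]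
@[simp] lemma pm10 : pm (1, 0) = σ1 := by rw [pm, if_pos rfl]
@[simp] lemma pm01 : pm (0, 1) = σ2 := by
  rw [pm, if_neg (by decide), if_pos rfl]
@[simp] lemma pm11 : pm (1, 1) = σ3 := by
  rw [pm, if_neg (by decide), if_neg (by decide), if_pos rfl]
@[simp] lemma pm0 : pm 0 = 1 := pm00
@[simp] lemma pm1 : pm 1 = σ3 := pm11

lemma sq1 : σ1 * σ1 = 1 := by
  ext i j; fin_cases i <;> fin_cases j <;>
    simp [σ1, Matrix.mul_apply, Fin.sum_univ_two, Matrix.one_apply]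
lemma sq2 : σ2 * σ2 = 1 := by
  ext i j; fin_cases i <;> fin_cases j <;>
    simp [σ2, Matrix.mul_apply, Fin.sum_univ_two, Matrix.one_apply, Complex.I_mul_I]
lemma sq3 : σ3 * σ3 = 1 := by
  ext i j; fin_cases i <;> fin_cases j <;>
    simp [σ3, Matrix.mul_apply, Fin.sum_univ_two, Matrix.one_apply]
lemma m12 : σ1 * σ2 = Complex.I • σ3 := by
  ext i j; fin_cases i <;> fin_cases j <;>
    simp [σ1, σ2, σ3, Matrix.mul_apply, Fin.sum_univ_two]
lemma m21 : σ2 * σ1 = -Complex.I • σ3 := by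
  ext i j; fin_cases i <;> fin_cases j <;>
    simp [σ1, σ2, σ3, Matrix.mul_apply, Fin.sum_univ_two]
lemma m13 : σ1 * σ3 = -Complex.I • σ2 := by
  ext i j; fin_cases i <;> fin_cases j <;>
    simp [σ1, σ2, σ3, Matrix.mul_apply, Fin.sum_univ_two, Complex.I_mul_I]
lemma m31 : σ3 * σ1 = Complex.I • σ2 := by
  ext i j; fin_cases i <;> fin_cases j <;>
    simp [σ1, σ2, σ3, Matrix.mul_apply, Fin.sum_univ_two, Complex.I_mul_I]
lemma m23 : σ2 * σ3 = Complex.I • σ1 := by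
  ext i j; fin_cases i <;> fin_cases j <;>
    simp [σ1, σ2, σ3, Matrix.mul_apply, Fin.sum_univ_two]
lemma m32 : σ3 * σ2 = -Complex.I • σ1 := by
  ext i j; fin_cases i <;> fin_cases j <;>
    simp [σ1, σ2, σ3, Matrix.mul_apply, Fin.sum_univ_two]

lemma pm_mul (v w : ZMod 2 × ZMod 2) :
    ∃ u : ℂ, Complex.normSq u = 1 ∧ pm v * pm w = u • pm (v + w) := by
  have h : ∀ x : ZMod 2, x = 0 ∨ x = 1 := by decide
  have e11 : (1 + 1 : ZMod 2) = 0 := rfl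
  obtain ⟨a, b⟩ := v; obtain ⟨c, d⟩ := w
  rcases h a with rfl | rfl <;> rcases h b with rfl | rfl <;>
    rcases h c with rfl | rfl <;> rcases h d with rfl | rfl <;>
    simp only [Prod.mk_add_mk, e11, add_zero, zero_add, pm00, pm10, pm01, pm11] <;>
    first
    | (refine ⟨1, by norm_num, ?_⟩ <;> simp only [one_smul, one_mul, mul_one, sq1, sq2, sq3] <;> done)
    | (refine ⟨Complex.I, by norm_num, ?_⟩ <;> simp only [m12, m31, m23] <;> done)
    | (refine ⟨-Complex.I, by norm_num, ?_⟩ <;> simp only [m21, m13, m32] <;> done)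

noncomputable def tens (M : ℕ) (f : Fin M → Matrix (Fin 2) (Fin 2) ℂ) :
    Matrix (Fin M → Fin 2) (Fin M → Fin 2) ℂ :=
  Matrix.of fun r c => ∏ s, f s (r s) (c s)

lemma tens_mul {M : ℕ} (f g : Fin M → Matrix (Fin 2) (Fin 2) ℂ) :
    tens M f * tens M g = tens M (fun s => f s * g s) := by
  ext r c
  simp only [tens, Matrix.mul_apply, Matrix.of_apply]
  rw [Finset.prod_univ_sum]
  simp [Fintype.piFinset_univ, Finset.prod_mul_distrib]

lemma tens_one {M : ℕ} : tens M (fun _ => 1) = 1 := by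
  ext r c
  by_cases h : r = c
  · subst h; simp [tens, Matrix.one_apply]
  · obtain ⟨s, hs⟩ : ∃ s, r s ≠ c s := by
      by_contra hc; push_neg at hc; exact h (funext hc)
    rw [tens, Matrix.of_apply, Matrix.one_apply_ne h,
      Finset.prod_eq_zero (Finset.mem_univ s)]
    exact Matrix.one_apply_ne hs

lemma trace_tens {M : ℕ} (f : Fin M → Matrix (Fin 2) (Fin 2) ℂ) :
    (tens M f).trace = ∏ s, (f s).trace := by
  simp only [Matrix.trace, Matrix.diag, tens, Matrix.of_apply]
  rw [Finset.prod_univ_sum]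
  simp [Fintype.piFinset_univ]

lemma trace_pm (v : ZMod 2 × ZMod 2) :
    (pm v).trace = if v = 0 then 2 else 0 := by
  have h : ∀ x : ZMod 2, x = 0 ∨ x = 1 := by decide
  obtain ⟨a, b⟩ := v
  rcases h a with rfl | rfl <;> rcases h b with rfl | rfl <;>
    simp [pm00, pm01, pm10, pm11, Matrix.trace, Matrix.diag, σ1, σ2, σ3,
      Fin.sum_univ_two, Prod.ext_iff] <;> decide

lemma prod_pm (L : List (ZMod 2 × ZMod 2)) :
    ∃ u : ℂ, Complex.normSq u = 1 ∧ (L.map pm).prod = u • pm L.sum := by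
  induction L with
  | nil => exact ⟨1, by norm_num, by simp⟩
  | cons v t ih =>
    obtain ⟨u, hu, he⟩ := ih
    obtain ⟨u', hu', he'⟩ := pm_mul v t.sum
    refine ⟨u * u', by rw [Complex.normSq_mul, hu, hu', mul_one], ?_⟩
    simp only [List.map_cons, List.prod_cons, he, List.sum_cons]
    rw [Matrix.mul_smul, he', smul_smul]

noncomputable def jordanWigner (M : ℕ) (i : Fin (2 * M)) :
    Matrix (Fin M → Fin 2) (Fin M → Fin 2) ℂ :=
  Matrix.of fun r c => ∏ s : Fin M,
    (if (s : ℕ) < (i : ℕ) / 2 then σ3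
     else if (s : ℕ) = (i : ℕ) / 2 then (if (i : ℕ) % 2 = 0 then σ1 else σ2)
     else 1) (r s) (c s)

noncomputable def fermionParity (M : ℕ) :
    Matrix (Fin M → Fin 2) (Fin M → Fin 2) ℂ :=
  Matrix.of fun r c => ∏ s : Fin M, σ3 (r s) (c s)

noncomputable def jwString (M : ℕ) (A : Finset (Fin (2 * M))) :
    Matrix (Fin M → Fin 2) (Fin M → Fin 2) ℂ :=
  ((A.sort (· ≤ ·)).map (jordanWigner M)).prod

def sig (M : ℕ) (i : Fin (2 * M)) (s : Fin M) : ZMod 2 × ZMod 2 :=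
  if (s : ℕ) < (i : ℕ) / 2 then (1, 1)
  else if (s : ℕ) = (i : ℕ) / 2 then (if (i : ℕ) % 2 = 0 then (1, 0) else (0, 1))
  else 0

lemma jw_eq (M : ℕ) (i : Fin (2 * M)) :
    jordanWigner M i = tens M (fun s => pm (sig M i s)) := by
  ext r c
  simp only [jordanWigner, tens, Matrix.of_apply]
  refine Finset.prod_congr rfl fun s _ => ?_
  have h : (if (s : ℕ) < (i : ℕ) / 2 then σ3
     else if (s : ℕ) = (i : ℕ) / 2 then (if (i : ℕ) % 2 = 0 then σ1 else σ2)
     else 1) = pm (sig M i s) := by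
    unfold sig; split_ifs <;> simp
  rw [h]

lemma parity_eq (M : ℕ) : fermionParity M = tens M (fun _ => pm (1, 1)) := by
  simp only [pm11]; rfl

lemma prod_map_jw (M : ℕ) (l : List (Fin (2 * M))) :
    (l.map (jordanWigner M)).prod
      = tens M (fun s => (l.map (fun i => pm (sig M i s))).prod) := by
  induction l with
  | nil => simp [tens_one.symm]
  | cons a t ih =>
    simp only [List.map_cons, List.prod_cons, ih, jw_eq, tens_mul]

lemma key (M : ℕ) (v0 : ZMod 2 × ZMod 2) (F : Fin M → List (ZMod 2 × ZMod 2)) :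
    Complex.normSq ((tens M fun s => pm v0 * ((F s).map pm).prod).trace)
      = ∏ s : Fin M, (if v0 + (F s).sum = 0 then (4 : ℝ) else 0) := by
  rw [trace_tens, map_prod Complex.normSq]
  refine Finset.prod_congr rfl fun s _ => ?_
  obtain ⟨u, hu, he⟩ := prod_pm (F s)
  obtain ⟨u', hu', he'⟩ := pm_mul v0 ((F s).sum)
  rw [he, Matrix.mul_smul, he', smul_smul, Matrix.trace_smul, smul_eq_mul,
    Complex.normSq_mul, Complex.normSq_mul, hu, hu', trace_pm]
  split_ifs <;> simp [Complex.normSq_ofNat] <;> norm_num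

def Lidx {M n : ℕ} (A : Fin n → Finset (Fin (2 * M))) : List (Fin (2 * M)) :=
  (List.ofFn fun k => (A k).sort (· ≤ ·)).flatten

lemma prodX {M n : ℕ} (A : Fin n → Finset (Fin (2 * M))) :
    (List.ofFn fun k => jwString M (A k)).prod
      = ((Lidx A).map (jordanWigner M)).prod := by
  rw [Lidx, List.map_flatten, List.map_ofFn, List.prod_flatten, List.map_ofFn]
  simp only [Function.comp, jwString]
  rfl

lemma sumV {M n : ℕ} (A : Fin n → Finset (Fin (2 * M))) (s : Fin M) :
    ((Lidx A).map (fun i => sig M i s)).sum = ∑ k, ∑ i ∈ A k, sig M i s := by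
  rw [Lidx, List.map_flatten, List.map_ofFn, List.sum_flatten, List.map_ofFn,
    List.sum_ofFn]
  refine Finset.sum_congr rfl fun k _ => ?_
  show (((A k).sort (· ≤ ·)).map fun i => sig M i s).sum = _
  rw [Finset.sum_eq_multiset_sum, ← Finset.sort_eq (s := A k) (r := (· ≤ ·))]; rfl

lemma normSq_noGamma {M n : ℕ} (A : Fin n → Finset (Fin (2 * M))) :
    Complex.normSq ((List.ofFn fun k => jwString M (A k)).prod.trace)
      = ∏ s : Fin M, (if (∑ k, ∑ i ∈ A k, sig M i s) = 0 then (4 : ℝ) else 0) := by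
  rw [prodX, prod_map_jw]
  have h : (fun s => ((Lidx A).map (fun i => pm (sig M i s))).prod)
      = fun s => pm 0 * (((Lidx A).map (fun i => sig M i s)).map pm).prod := by
    funext s; rw [pm0, one_mul, List.map_map]; rfl
  rw [h, key]
  exact Finset.prod_congr rfl fun s _ => by rw [zero_add, sumV]

lemma normSq_Gamma {M n : ℕ} (A : Fin n → Finset (Fin (2 * M))) :
    Complex.normSq ((fermionParity M * (List.ofFn fun k => jwString M (A k)).prod).trace)
      = ∏ s : Fin M,
          (if (1, 1) + (∑ k, ∑ i ∈ A k, sig M i s) = 0 then (4 : ℝ) else 0) := by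
  rw [prodX, prod_map_jw, parity_eq, tens_mul]
  have h : (fun s => pm (1, 1) * ((Lidx A).map (fun i => pm (sig M i s))).prod)
      = fun s => pm (1, 1) * (((Lidx A).map (fun i => sig M i s)).map pm).prod := by
    funext s; rw [List.map_map]; rfl
  rw [h, key]
  exact Finset.prod_congr rfl fun s _ => by rw [sumV]

def gsig (t j : ℕ) : ZMod 2 × ZMod 2 :=
  if t < j / 2 then (1, 1)
  else if t = j / 2 then (if j % 2 = 0 then (1, 0) else (0, 1))
  else 0

lemma sig_eq_gsig (M : ℕ) (i : Fin (2 * M)) (s : Fin M) :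
    sig M i s = gsig (s : ℕ) (i : ℕ) := rfl

lemma gsig_psum (t m : ℕ) :
    ∑ j ∈ Finset.range (2 * m), gsig t j
      = if t < m then ((1, 1) : ZMod 2 × ZMod 2) else 0 := by
  induction m with
  | zero => simp
  | succ m ih =>
    have h2 : 2 * (m + 1) = (2 * m) + 1 + 1 := by ring
    rw [h2, Finset.sum_range_succ, Finset.sum_range_succ, ih]
    unfold gsig
    split_ifs <;> first | rfl | decide | omega

lemma sig_sum_univ (M : ℕ) (s : Fin M) :
    ∑ i : Fin (2 * M), sig M i s = (1, 1) := by
  have h := Fin.sum_univ_eq_sum_range (fun j => gsig (s : ℕ) j) (2 * M)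
  simp only [sig_eq_gsig]
  rw [h, gsig_psum, if_pos s.isLt]

lemma crit_empty {M : ℕ} (D : Finset (Fin (2 * M))) :
    (∀ s : Fin M, ∑ i ∈ D, sig M i s = 0) ↔ D = ∅ := by
  constructor
  · intro h
    by_contra hne
    have hD : D.Nonempty := Finset.nonempty_iff_ne_empty.mpr hne
    set i0 := D.max' hD with hi0def
    have hi0 : i0 ∈ D := D.max'_mem hD
    have hlt : (i0 : ℕ) < 2 * M := i0.isLt
    have hM : (i0 : ℕ) / 2 < M := by omega
    set s0 : Fin M := ⟨(i0 : ℕ) / 2, hM⟩ with hs0def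
    have ha : 2 * ((i0 : ℕ) / 2) < 2 * M := by omega
    have hb : 2 * ((i0 : ℕ) / 2) + 1 < 2 * M := by omega
    set fa : Fin (2 * M) := ⟨2 * ((i0 : ℕ) / 2), ha⟩ with hfadef
    set fb : Fin (2 * M) := ⟨2 * ((i0 : ℕ) / 2) + 1, hb⟩ with hfbdef
    have hfav : (fa : ℕ) = 2 * ((i0 : ℕ) / 2) := rfl
    have hfbv : (fb : ℕ) = 2 * ((i0 : ℕ) / 2) + 1 := rfl
    have hab : fa ≠ fb := by
      intro hcon
      have := congrArg Fin.val hcon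
      rw [hfav, hfbv] at this; omega
    have hview : ∀ i ∈ D, sig M i s0
        = (if i = fa then ((1, 0) : ZMod 2 × ZMod 2) else 0)
          + (if i = fb then ((0, 1) : ZMod 2 × ZMod 2) else 0) := by
      intro i hi
      have hle : (i : ℕ) ≤ (i0 : ℕ) := D.le_max' i hi
      have hs0 : (s0 : ℕ) = (i0 : ℕ) / 2 := rfl
      rw [sig]
      have hnot : ¬ ((s0 : ℕ) < (i : ℕ) / 2) := by rw [hs0]; omega
      rw [if_neg hnot]
      by_cases he : (s0 : ℕ) = (i : ℕ) / 2
      · rw [if_pos he]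
        rw [hs0] at he
        by_cases hp : (i : ℕ) % 2 = 0
        · have hia : i = fa := by
            apply Fin.ext; rw [hfav]; omega
          have hib : i ≠ fb := by rw [hia]; exact hab
          rw [if_pos hp, if_pos hia, if_neg hib, add_zero]
        · have hib : i = fb := by
            apply Fin.ext; rw [hfbv]; omega
          have hia : i ≠ fa := by rw [hib]; exact fun hcon => hab hcon.symm
          rw [if_neg hp, if_neg hia, if_pos hib, zero_add]
      · rw [hs0] at he
        have hia : i ≠ fa := by
          intro hcon
          have := congrArg Fin.val hcon
          rw [hfav] at this; omega
        have hib : i ≠ fb := by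
          intro hcon
          have := congrArg Fin.val hcon
          rw [hfbv] at this; omega
        rw [if_neg (by rw [hs0]; exact he), if_neg hia, if_neg hib, add_zero]
    have hsum := h s0
    rw [Finset.sum_congr rfl hview, Finset.sum_add_distrib,
      Finset.sum_ite_eq' D fa, Finset.sum_ite_eq' D fb] at hsum
    have hi0ab : i0 = fa ∨ i0 = fb := by
      rcases Nat.even_or_odd (i0 : ℕ) with hp | hp
      · left; apply Fin.ext; rw [hfav]; rcases hp with ⟨c, hc⟩; omega
      · right; apply Fin.ext; rw [hfbv]; rcases hp with ⟨c, hc⟩; omega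
    rcases hi0ab with hfa | hfb
    · rw [if_pos (hfa ▸ hi0)] at hsum
      by_cases h2 : fb ∈ D
      · rw [if_pos h2] at hsum; exact absurd hsum (by decide)
      · rw [if_neg h2] at hsum; exact absurd hsum (by decide)
    · rw [if_pos (show fb ∈ D from hfb ▸ hi0)] at hsum
      by_cases h1 : fa ∈ D
      · rw [if_pos h1] at hsum; exact absurd hsum (by decide)
      · rw [if_neg h1] at hsum; exact absurd hsum (by decide)
  · rintro rfl; simp

lemma crit_univ {M : ℕ} (D : Finset (Fin (2 * M))) :
    (∀ s : Fin M, ((1, 1) : ZMod 2 × ZMod 2) + ∑ i ∈ D, sig M i s = 0)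
      ↔ D = Finset.univ := by
  have hx : ∀ v : ZMod 2 × ZMod 2, v + v = 0 := by decide
  have hcompl : ∀ s : Fin M,
      ((1, 1) : ZMod 2 × ZMod 2) + ∑ i ∈ D, sig M i s = ∑ i ∈ Dᶜ, sig M i s := by
    intro s
    have hsplit : (∑ i ∈ D, sig M i s) + ∑ i ∈ Dᶜ, sig M i s = (1, 1) := by
      rw [Finset.sum_add_sum_compl]; exact sig_sum_univ M s
    calc ((1, 1) : ZMod 2 × ZMod 2) + ∑ i ∈ D, sig M i s
        = ((∑ i ∈ D, sig M i s) + ∑ i ∈ Dᶜ, sig M i s) + ∑ i ∈ D, sig M i s := by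
          rw [hsplit]
      _ = (∑ i ∈ Dᶜ, sig M i s) + ((∑ i ∈ D, sig M i s) + ∑ i ∈ D, sig M i s) := by
          abel
      _ = ∑ i ∈ Dᶜ, sig M i s := by rw [hx, add_zero]
  simp only [hcompl]
  rw [crit_empty]
  exact ⟨fun h => by simpa using congrArg compl h, fun h => by simp [h]⟩

def cpar {M n : ℕ} (A : Fin n → Finset (Fin (2 * M))) (i : Fin (2 * M)) : ZMod 2 :=
  ∑ k, if i ∈ A k then 1 else 0

lemma Vsum_filter {M n : ℕ} (A : Fin n → Finset (Fin (2 * M))) (s : Fin M) :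
    (∑ k, ∑ i ∈ A k, sig M i s)
      = ∑ i ∈ Finset.univ.filter (fun i => cpar A i = 1), sig M i s := by
  have h1 : ∀ k, ∑ i ∈ A k, sig M i s
      = ∑ i : Fin (2 * M), (if i ∈ A k then (1 : ZMod 2) else 0) • sig M i s := by
    intro k
    have hsw : ∀ i : Fin (2 * M), (if i ∈ A k then (1 : ZMod 2) else 0) • sig M i s
        = (if i ∈ A k then sig M i s else 0) := by
      intro i; split_ifs <;> simp
    simp only [hsw]
    rw [Finset.sum_ite_mem]
    simp
  simp only [h1]
  rw [Finset.sum_comm]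
  have h2 : ∀ i : Fin (2 * M), (∑ k, (if i ∈ A k then (1 : ZMod 2) else 0) • sig M i s)
      = cpar A i • sig M i s := fun i => by rw [← Finset.sum_smul]; rfl
  simp only [h2]
  rw [← Finset.sum_filter_add_sum_filter_not Finset.univ (fun i => cpar A i = 1)]
  have h3 : ∑ i ∈ Finset.univ.filter (fun i => ¬ cpar A i = 1), cpar A i • sig M i s = 0 := by
    refine Finset.sum_eq_zero fun i hi => ?_
    have := (Finset.mem_filter.mp hi).2
    have hz : cpar A i = 0 ∨ cpar A i = 1 := by
      rcases (show ∀ x : ZMod 2, x = 0 ∨ x = 1 by decide) (cpar A i) with h | h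
      · exact Or.inl h
      · exact Or.inr h
    rcases hz with h | h
    · rw [h, zero_smul]
    · exact absurd h this
  rw [h3, add_zero]
  exact Finset.sum_congr rfl fun i hi => by
    rw [(Finset.mem_filter.mp hi).2, one_smul]

lemma prod_ite_pow {M : ℕ} (P : Fin M → Prop) [DecidablePred P] :
    (∏ s, if P s then (4 : ℝ) else 0) = if ∀ s, P s then (4 : ℝ) ^ M else 0 := by
  by_cases h : ∀ s, P s
  · rw [if_pos h, Finset.prod_congr rfl (fun s _ => if_pos (h s)), Finset.prod_const,
      Finset.card_univ, Fintype.card_fin]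
  · rw [if_neg h]
    push_neg at h
    obtain ⟨s, hs⟩ := h
    exact Finset.prod_eq_zero (Finset.mem_univ s) (if_neg hs)

lemma inner_val {M n : ℕ} (A : Fin n → Finset (Fin (2 * M))) :
    Complex.normSq ((List.ofFn fun k => jwString M (A k)).prod.trace)
      + Complex.normSq
          ((fermionParity M * (List.ofFn fun k => jwString M (A k)).prod).trace)
    = (if ∀ i, cpar A i = 0 then (4 : ℝ) ^ M else 0)
      + (if ∀ i, cpar A i = 1 then (4 : ℝ) ^ M else 0) := by
  rw [normSq_noGamma, normSq_Gamma, prod_ite_pow, prod_ite_pow]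
  have e0 : (∀ s : Fin M, (∑ k, ∑ i ∈ A k, sig M i s) = 0) ↔ ∀ i, cpar A i = 0 := by
    simp only [Vsum_filter]
    rw [crit_empty, Finset.eq_empty_iff_forall_notMem]
    constructor
    · intro h i
      have := h i
      simp only [Finset.mem_filter, Finset.mem_univ, true_and] at this
      rcases (show ∀ x : ZMod 2, x = 0 ∨ x = 1 by decide) (cpar A i) with h' | h'
      · exact h'
      · exact absurd h' this
    · intro h i
      simp only [Finset.mem_filter, Finset.mem_univ, true_and]
      rw [h i]; decide
  have e1 : (∀ s : Fin M, ((1, 1) : ZMod 2 × ZMod 2) + (∑ k, ∑ i ∈ A k, sig M i s) = 0)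
      ↔ ∀ i, cpar A i = 1 := by
    simp only [Vsum_filter]
    rw [crit_univ, Finset.eq_univ_iff_forall]
    simp only [Finset.mem_filter, Finset.mem_univ, true_and]
  rw [if_congr e0 rfl rfl, if_congr e1 rfl rfl]

noncomputable def eps (x : ZMod 2) : ℝ := if x = 0 then 1 else -1

lemma eps_zero : eps 0 = 1 := by simp [eps]

lemma eps_add (x y : ZMod 2) : eps (x + y) = eps x * eps y := by
  have e : (1 + 1 : ZMod 2) = 0 := rfl
  rcases (show ∀ z : ZMod 2, z = 0 ∨ z = 1 by decide) x with rfl | rfl <;>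
    rcases (show ∀ z : ZMod 2, z = 0 ∨ z = 1 by decide) y with rfl | rfl <;>
    simp [eps, e] <;> norm_num

lemma eps_sum {ι : Type*} (s : Finset ι) (f : ι → ZMod 2) :
    eps (∑ i ∈ s, f i) = ∏ i ∈ s, eps (f i) := by
  classical
  induction s using Finset.cons_induction with
  | empty => simp [eps_zero]
  | cons a t ha ih => rw [Finset.sum_cons, Finset.prod_cons, eps_add, ih]

lemma eps_natCast (m : ℕ) : eps (m : ZMod 2) = (-1 : ℝ) ^ m := by
  induction m with
  | zero => simp [eps_zero]
  | succ m ih =>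
    push_cast
    rw [eps_add, ih, pow_succ]
    norm_num [eps]

lemma sum_eps {N' : ℕ} (c : Fin N' → ZMod 2) :
    ∑ B : Finset (Fin N'), eps (∑ i ∈ B, c i)
      = if ∀ i, c i = 0 then (2 : ℝ) ^ N' else 0 := by
  have h1 : ∑ B : Finset (Fin N'), eps (∑ i ∈ B, c i)
      = ∑ B ∈ (Finset.univ : Finset (Fin N')).powerset, ∏ i ∈ B, eps (c i) := by
    rw [Finset.powerset_univ]
    exact Finset.sum_congr rfl fun B _ => eps_sum B c
  have h2 : ∏ i : Fin N', (eps (c i) + 1)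
      = ∑ B ∈ (Finset.univ : Finset (Fin N')).powerset,
          (∏ i ∈ B, eps (c i)) * ∏ i ∈ Finset.univ \ B, (1 : ℝ) :=
    Finset.prod_add _ _ _
  simp only [Finset.prod_const_one, mul_one] at h2
  rw [h1, ← h2]
  by_cases h : ∀ i, c i = 0
  · rw [if_pos h, Finset.prod_congr rfl (fun i _ => by rw [h i]),
      Finset.prod_const, Finset.card_univ, Fintype.card_fin]
    norm_num [eps_zero]
  · rw [if_neg h]
    push_neg at h
    obtain ⟨i, hi⟩ := h
    refine Finset.prod_eq_zero (Finset.mem_univ i) ?_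
    have : c i = 1 := by
      rcases (show ∀ z : ZMod 2, z = 0 ∨ z = 1 by decide) (c i) with h' | h'
      · exact absurd h' hi
      · exact h'
    rw [this]
    norm_num [eps]

lemma two_sum_even {N' : ℕ} (c : Fin N' → ZMod 2) :
    2 * ∑ B ∈ Finset.univ.filter (fun B : Finset (Fin N') => Even B.card),
          eps (∑ i ∈ B, c i)
      = (if ∀ i, c i = 0 then (2 : ℝ) ^ N' else 0)
        + (if ∀ i, c i = 1 then (2 : ℝ) ^ N' else 0) := by
  have key : ∀ B : Finset (Fin N'),
      2 * (if Even B.card then eps (∑ i ∈ B, c i) else 0)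
        = eps (∑ i ∈ B, c i) + eps (∑ i ∈ B, (c i + 1)) := by
    intro B
    have hc : (∑ i ∈ B, (c i + 1)) = (∑ i ∈ B, c i) + (B.card : ZMod 2) := by
      rw [Finset.sum_add_distrib, Finset.sum_const, nsmul_eq_mul, mul_one]
    rw [hc, eps_add, eps_natCast]
    by_cases he : Even B.card
    · rw [if_pos he, he.neg_one_pow]; ring
    · rw [if_neg he, (Nat.not_even_iff_odd.mp he).neg_one_pow]; ring
  have hstep : 2 * ∑ B ∈ Finset.univ.filter (fun B : Finset (Fin N') => Even B.card),
        eps (∑ i ∈ B, c i)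
      = ∑ B : Finset (Fin N'), 2 * (if Even B.card then eps (∑ i ∈ B, c i) else 0) := by
    rw [Finset.mul_sum, Finset.sum_filter]
    exact Finset.sum_congr rfl fun B _ => by split_ifs <;> ring
  rw [hstep, Finset.sum_congr rfl (fun B _ => key B), Finset.sum_add_distrib,
    sum_eps c, sum_eps (fun i => c i + 1)]
  congr 1
  refine if_congr (forall_congr' fun i => ?_) rfl rfl
  exact (show ∀ x : ZMod 2, x + 1 = 0 ↔ x = 1 by decide) (c i)

lemma reindex (N s : ℕ) (hs : s ≤ N) (w : ℕ → ℝ) :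
    ∑ j ∈ Finset.range (s + 1), (s.choose j : ℝ) *
        ∑ m ∈ Finset.range (N - s + 1), ((N - s).choose m : ℝ) * (w (j + m) * (-1) ^ j)
      = ∑ l ∈ Finset.range (N + 1), w l *
          ∑ j ∈ Finset.range (min s l + 1),
            (-1 : ℝ) ^ j * (s.choose j : ℝ) * ((N - s).choose (l - j) : ℝ) := by
  have hR : ∑ l ∈ Finset.range (N + 1), w l *
        ∑ j ∈ Finset.range (min s l + 1),
          (-1 : ℝ) ^ j * (s.choose j : ℝ) * ((N - s).choose (l - j) : ℝ)
      = ∑ q ∈ (Finset.range (N + 1)).sigma (fun l => Finset.range (min s l + 1)),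
          w q.1 * ((-1 : ℝ) ^ q.2 * (s.choose q.2 : ℝ) * ((N - s).choose (q.1 - q.2) : ℝ)) := by
    rw [Finset.sum_sigma]
    exact Finset.sum_congr rfl fun l _ => Finset.mul_sum _ _ _
  have hL : ∑ j ∈ Finset.range (s + 1), (s.choose j : ℝ) *
        ∑ m ∈ Finset.range (N - s + 1), ((N - s).choose m : ℝ) * (w (j + m) * (-1) ^ j)
      = ∑ p ∈ (Finset.range (s + 1)) ×ˢ (Finset.range (N - s + 1)),
          (s.choose p.1 : ℝ) * (((N - s).choose p.2 : ℝ) * (w (p.1 + p.2) * (-1) ^ p.1)) := by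
    rw [Finset.sum_product]
    exact Finset.sum_congr rfl fun j _ => Finset.mul_sum _ _ _
  rw [hR, hL]
  set S := ((Finset.range (N + 1)).sigma (fun l => Finset.range (min s l + 1))).filter
    (fun q => q.1 - q.2 ≤ N - s) with hS
  have hsplit : ∑ q ∈ (Finset.range (N + 1)).sigma (fun l => Finset.range (min s l + 1)),
        w q.1 * ((-1 : ℝ) ^ q.2 * (s.choose q.2 : ℝ) * ((N - s).choose (q.1 - q.2) : ℝ))
      = ∑ q ∈ S, w q.1 * ((-1 : ℝ) ^ q.2 * (s.choose q.2 : ℝ)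
          * ((N - s).choose (q.1 - q.2) : ℝ)) := by
    rw [hS]
    refine (Finset.sum_filter_of_ne fun q _ hne => ?_).symm
    by_contra hgt
    push_neg at hgt
    rw [Nat.choose_eq_zero_of_lt hgt] at hne
    simp at hne
  rw [hsplit]
  refine (Finset.sum_nbij' (fun q => (q.2, q.1 - q.2)) (fun p => ⟨p.1 + p.2, p.1⟩)
    ?_ ?_ ?_ ?_ ?_).symm
  · intro q hq
    simp only [hS, Finset.mem_filter, Finset.mem_sigma, Finset.mem_range] at hq
    simp only [Finset.mem_product, Finset.mem_range]
    omega
  · intro p hp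
    simp only [Finset.mem_product, Finset.mem_range] at hp
    simp only [hS, Finset.mem_filter, Finset.mem_sigma, Finset.mem_range]
    omega
  · intro q hq
    simp only [hS, Finset.mem_filter, Finset.mem_sigma, Finset.mem_range] at hq
    have : q.2 + (q.1 - q.2) = q.1 := by omega
    exact Sigma.ext (by simp [this]) (by simp)
  · intro p hp
    simp only [Finset.mem_product, Finset.mem_range] at hp
    simp
  · intro q hq
    simp only [hS, Finset.mem_filter, Finset.mem_sigma, Finset.mem_range] at hq
    have h1 : q.2 + (q.1 - q.2) = q.1 := by omega
    rw [h1]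
    ring

noncomputable def FB {M : ℕ} (w : ℕ → ℝ) (B : Finset (Fin (2 * M))) : ℝ :=
  ∑ A' : Finset (Fin (2 * M)), w A'.card * eps (∑ i ∈ B, if i ∈ A' then 1 else 0)

lemma eps_inter {M : ℕ} (B A' : Finset (Fin (2 * M))) :
    eps (∑ i ∈ B, if i ∈ A' then (1 : ZMod 2) else 0) = (-1 : ℝ) ^ (B ∩ A').card := by
  rw [Finset.sum_boole, eps_natCast, Finset.filter_mem_eq_inter]

lemma FB_card {M : ℕ} (w : ℕ → ℝ) (B : Finset (Fin (2 * M))) :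
    FB w B = ∑ l ∈ Finset.range (2 * M + 1), w l *
        ∑ j ∈ Finset.range (min B.card l + 1),
          (-1 : ℝ) ^ j * (B.card.choose j : ℝ) * ((2 * M - B.card).choose (l - j) : ℝ) := by
  have hBc : B.card ≤ 2 * M := by
    simpa using Finset.card_le_card (Finset.subset_univ B)
  have hcompl : Bᶜ.card = 2 * M - B.card := by
    rw [Finset.card_compl, Fintype.card_fin]
  rw [← reindex (2 * M) B.card hBc w]
  have h1 : FB w B = ∑ A' ∈ (Finset.univ : Finset (Fin (2 * M))).powerset,
      w A'.card * (-1 : ℝ) ^ (B ∩ A').card := by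
    rw [Finset.powerset_univ, FB]
    exact Finset.sum_congr rfl fun A' _ => by rw [eps_inter]
  rw [h1]
  have h2 : ∑ A' ∈ (Finset.univ : Finset (Fin (2 * M))).powerset,
        w A'.card * (-1 : ℝ) ^ (B ∩ A').card
      = ∑ p ∈ B.powerset ×ˢ Bᶜ.powerset,
          w (p.1.card + p.2.card) * (-1 : ℝ) ^ p.1.card := by
    refine Finset.sum_nbij' (fun A' => (A' ∩ B, A' \ B)) (fun p => p.1 ∪ p.2)
      ?_ ?_ ?_ ?_ ?_
    · intro A' _
      simp only [Finset.mem_product, Finset.mem_powerset]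
      constructor
      · exact Finset.inter_subset_right
      · intro x hx
        rw [Finset.mem_compl]
        exact (Finset.mem_sdiff.mp hx).2
    · intro p _
      simp [Finset.mem_powerset, Finset.subset_univ]
    · intro A' _
      show (A' ∩ B) ∪ (A' \ B) = A'
      rw [Finset.union_comm, Finset.sdiff_union_inter]
    · intro p hp
      simp only [Finset.mem_product, Finset.mem_powerset] at hp
      obtain ⟨hP, hQ⟩ := hp
      have hA : (p.1 ∪ p.2) ∩ B = p.1 := by
        ext x
        simp only [Finset.mem_inter, Finset.mem_union]
        constructor
        · rintro ⟨hx | hx, hxB⟩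
          · exact hx
          · exact absurd hxB (Finset.mem_compl.mp (hQ hx))
        · intro hx; exact ⟨Or.inl hx, hP hx⟩
      have hB2 : (p.1 ∪ p.2) \ B = p.2 := by
        ext x
        simp only [Finset.mem_sdiff, Finset.mem_union]
        constructor
        · rintro ⟨hx | hx, hxB⟩
          · exact absurd (hP hx) hxB
          · exact hx
        · intro hx; exact ⟨Or.inr hx, Finset.mem_compl.mp (hQ hx)⟩
      show ((p.1 ∪ p.2) ∩ B, (p.1 ∪ p.2) \ B) = p
      rw [hA, hB2]
    · intro A' _
      have hcard : (A' ∩ B).card + (A' \ B).card = A'.card :=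
        Finset.card_inter_add_card_sdiff A' B
      show w A'.card * (-1 : ℝ) ^ (B ∩ A').card
          = w ((A' ∩ B).card + (A' \ B).card) * (-1 : ℝ) ^ (A' ∩ B).card
      rw [hcard, Finset.inter_comm]
  rw [h2, Finset.sum_product]
  have h3 : ∀ P ∈ B.powerset, ∑ Q ∈ Bᶜ.powerset,
        w (P.card + Q.card) * (-1 : ℝ) ^ P.card
      = ∑ m ∈ Finset.range (2 * M - B.card + 1),
          ((2 * M - B.card).choose m : ℝ) * (w (P.card + m) * (-1 : ℝ) ^ P.card) := by
    intro P _
    rw [Finset.sum_powerset_apply_card (fun m => w (P.card + m) * (-1 : ℝ) ^ P.card),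
      hcompl]
    exact Finset.sum_congr rfl fun m _ => by rw [nsmul_eq_mul]
  rw [Finset.sum_congr rfl h3,
    Finset.sum_powerset_apply_card (fun j => ∑ m ∈ Finset.range (2 * M - B.card + 1),
      ((2 * M - B.card).choose m : ℝ) * (w (j + m) * (-1 : ℝ) ^ j))]
  exact Finset.sum_congr rfl fun j _ => by rw [nsmul_eq_mul, Finset.mul_sum]

noncomputable def phi (M : ℕ) (w : ℕ → ℝ) (s : ℕ) : ℝ :=
  ∑ l ∈ Finset.range (2 * M + 1), w l *
    ∑ j ∈ Finset.range (min s l + 1),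
      (-1 : ℝ) ^ j * (s.choose j : ℝ) * ((2 * M - s).choose (l - j) : ℝ)

lemma FB_card' {M : ℕ} (w : ℕ → ℝ) (B : Finset (Fin (2 * M))) :
    FB w B = phi M w B.card := FB_card w B

lemma FB_pow {M : ℕ} (n : ℕ) (w : ℕ → ℝ) (B : Finset (Fin (2 * M))) :
    (FB w B) ^ n = ∑ A : Fin n → Finset (Fin (2 * M)),
      (∏ k, w ((A k).card)) * eps (∑ i ∈ B, cpar A i) := by
  have hp : (FB w B) ^ n = ∑ p ∈ Fintype.piFinset
      (fun _ : Fin n => (Finset.univ : Finset (Finset (Fin (2 * M))))),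
      ∏ i, w ((p i).card) * eps (∑ x ∈ B, if x ∈ p i then 1 else 0) := by
    rw [FB]
    exact Finset.sum_pow' _ _ n
  rw [hp, Fintype.piFinset_univ]
  refine Finset.sum_congr rfl fun A _ => ?_
  rw [Finset.prod_mul_distrib]
  congr 1
  rw [← eps_sum Finset.univ (fun k => ∑ i ∈ B, if i ∈ A k then (1 : ZMod 2) else 0),
    Finset.sum_comm]
  rfl

lemma group_card {M : ℕ} (n : ℕ) (w : ℕ → ℝ) :
    ∑ B ∈ Finset.univ.filter (fun B : Finset (Fin (2 * M)) => Even B.card), (FB w B) ^ n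
      = ∑ s ∈ (Finset.range (2 * M + 1)).filter (fun s => Even s),
          ((2 * M).choose s : ℝ) * (phi M w s) ^ n := by
  rw [Finset.sum_filter, Finset.sum_filter]
  have h1 : ∑ B : Finset (Fin (2 * M)), (if Even B.card then (FB w B) ^ n else 0)
      = ∑ B ∈ (Finset.univ : Finset (Fin (2 * M))).powerset,
          (if Even B.card then (phi M w B.card) ^ n else 0) := by
    rw [Finset.powerset_univ]
    exact Finset.sum_congr rfl fun B _ => by rw [FB_card']
  rw [h1, Finset.sum_powerset_apply_card (fun m => if Even m then (phi M w m) ^ n else 0),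
    Finset.card_univ, Fintype.card_fin]
  refine Finset.sum_congr rfl fun m _ => ?_
  split_ifs with h
  · rw [nsmul_eq_mul]
  · rw [smul_zero]

theorem brownian_SYK_moment (M n : ℕ) (hn : 1 ≤ n) (w : ℕ → ℝ) :
    (1 / 2 : ℝ) *
        ∑ A : Fin n → Finset (Fin (2 * M)),
          (∏ k, w ((A k).card)) *
            (Complex.normSq
                (Matrix.trace ((List.ofFn fun k => jwString M (A k)).prod))
              + Complex.normSq
                  (Matrix.trace
                    (fermionParity M * (List.ofFn fun k => jwString M (A k)).prod)))
      = ∑ s ∈ (Finset.range (2 * M + 1)).filter (fun s => Even s),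
          ((2 * M).choose s : ℝ) *
            (∑ l ∈ Finset.range (2 * M + 1), w l *
                ∑ j ∈ Finset.range (min s l + 1),
                  (-1 : ℝ) ^ j * (s.choose j : ℝ) * ((2 * M - s).choose (l - j) : ℝ)) ^ n := by
  have h4 : (4 : ℝ) ^ M = 2 ^ (2 * M) := by rw [pow_mul]; norm_num
  have step1 : ∀ A : Fin n → Finset (Fin (2 * M)),
      (∏ k, w ((A k).card)) *
        (Complex.normSq (Matrix.trace ((List.ofFn fun k => jwString M (A k)).prod))
          + Complex.normSq (Matrix.trace
              (fermionParity M * (List.ofFn fun k => jwString M (A k)).prod)))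
      = ∑ B ∈ Finset.univ.filter (fun B : Finset (Fin (2 * M)) => Even B.card),
          2 * ((∏ k, w ((A k).card)) * eps (∑ i ∈ B, cpar A i)) := by
    intro A
    rw [inner_val, h4, ← two_sum_even (cpar A), ← Finset.mul_sum, Finset.mul_sum]
    rw [← Finset.mul_sum, ← Finset.mul_sum]
    ring
  rw [Finset.sum_congr rfl fun A _ => step1 A, Finset.sum_comm]
  have step2 : ∀ B : Finset (Fin (2 * M)),
      (∑ A : Fin n → Finset (Fin (2 * M)),
        2 * ((∏ k, w ((A k).card)) * eps (∑ i ∈ B, cpar A i)))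
      = 2 * (FB w B) ^ n := by
    intro B
    rw [FB_pow, Finset.mul_sum]
  rw [Finset.sum_congr rfl fun B _ => step2 B, ← Finset.mul_sum, ← mul_assoc]
  norm_num
  exact group_card n w
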